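/- arXiv:2209.06655 — 2 statements merged into one kernel-verified Lean document; each statement's English description precedes it below -/
import Mathlib

section
/- Let B, C be finite subsets of 𝕀. The following are equivalent: (1) there exists a nonempty A ∈ P_fci(𝕀) with l(A) = B and r(A) = C; (2) B ≠ ∅, min(B ∪ C) ∈ B, and either (a) max(B ∪ C) ∈ C and 𝔰⁻¹(B ∪ C, C ∖ B) = B ∖ C, or (b) max(B ∪ C) ∈ B ∖ C and 𝔰⁻¹(B ∪ C, C ∖ B) ∪ {max(B ∪ C)} = B ∖ C. -/
namespace MCpaper

open FirstOrder Language Structure Set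

/-- `𝕀`: a dense linear order with a least element `0` and no greatest element,
concretely the nonnegative rationals. -/
abbrev II : Type := NNRat

/-! ### Set-level operations associated to a linear order -/

section SetOps

variable {α : Type*} [LinearOrder α]

/-- The singleton of the least element of `A` (as a set; empty if `A` has no least element). -/
def minSet (A : Set α) : Set α := {i ∈ A | ∀ j ∈ A, i ≤ j}

/-- The singleton of the greatest element of `A` (as a set; empty if `A` has no greatest
element). -/
def maxSet (A : Set α) : Set α := {i ∈ A | ∀ j ∈ A, j ≤ i}

/-- `sInvSet A B = {i ∈ A : i has a successor in the suborder A and that successor lies in B}`. -/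
def sInvSet (A B : Set α) : Set α :=
  {i ∈ A | ∃ j ∈ A, i < j ∧ (∀ k ∈ A, i < k → j ≤ k) ∧ j ∈ B}

lemma minSet_subset (A : Set α) : minSet A ⊆ A := sep_subset _ _

lemma minSet_subsingleton (A : Set α) : (minSet A).Subsingleton :=
  fun x hx y hy => le_antisymm (hx.2 y hy.1) (hy.2 x hx.1)

lemma maxSet_subsingleton (A : Set α) : (maxSet A).Subsingleton :=
  fun x hx y hy => le_antisymm (hy.2 x hx.1) (hx.2 y hy.1)
lemma maxSet_subset (A : Set α) : maxSet A ⊆ A := sep_subset _ _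
lemma sInvSet_subset (A B : Set α) : sInvSet A B ⊆ A := sep_subset _ _

end SetOps

/-! ### The languages -/

/-- Relation symbols of `L_MO = {⊆, ∃<}`. -/
inductive MORel : ℕ → Type
  | sub : MORel 2
  | elt : MORel 2

/-- The language `L_MO = {⊆, ∃<}` with two binary relation symbols. -/
def LMO : Language := ⟨fun _ => Empty, MORel⟩

/-- Function symbols of `L_WSO`. -/
inductive WSOFunc : ℕ → Type
  | union : WSOFunc 2
  | inter : WSOFunc 2
  | bot : WSOFunc 0
  | zero : WSOFunc 0
  | min : WSOFunc 1
  | max : WSOFunc 1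
  | sinv : WSOFunc 2

/-- The language `L_WSO = {∪, ∩, ⊥, 𝟎, min, max, 𝔰⁻¹}`. -/
def LWSO : Language := ⟨WSOFunc, fun _ => Empty⟩

/-- Function symbols of `L_MSOFin`. -/
inductive MSOFinFunc : ℕ → Type
  | union : MSOFinFunc 2
  | inter : MSOFinFunc 2
  | bot : MSOFinFunc 0
  | zero : MSOFinFunc 0
  | zeroStar : MSOFinFunc 0
  | sinv : MSOFinFunc 1

/-- The language `L_MSOFin = {∪, ∩, ⊥, 𝟎, 𝟎*, s⁻¹}`. -/
def LMSOFin : Language := ⟨MSOFinFunc, fun _ => Empty⟩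

/-- Function symbols of `L_L`. -/
inductive LLFunc : ℕ → Type
  | union : LLFunc 2
  | inter : LLFunc 2
  | bot : LLFunc 0
  | zero : LLFunc 0
  | min : LLFunc 1
  | max : LLFunc 1
  | left : LLFunc 1
  | right : LLFunc 1

/-- The language `L_L = {∪, ∩, ⊥, 𝟎, min, max, l, r}`. -/
def LL : Language := ⟨LLFunc, fun _ => Empty⟩

/-! ### `WSO(𝕀)` as an `L_WSO`-structure and as an `L_MO`-structure -/

/-- The universe of `WSO(𝕀)`: finite subsets of `𝕀`. -/
abbrev FinSub : Type := {A : Set II // A.Finite}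

/-- `WSO(𝕀)` as an `L_WSO`-structure. -/
instance finSubLWSO : LWSO.Structure FinSub where
  funMap {n} f :=
    match f with
    | .union => fun v => ⟨(v 0).1 ∪ (v 1).1, (v 0).2.union (v 1).2⟩
    | .inter => fun v => ⟨(v 0).1 ∩ (v 1).1, (v 0).2.inter_of_left _⟩
    | .bot => fun _ => ⟨∅, finite_empty⟩
    | .zero => fun _ => ⟨{0}, finite_singleton _⟩
    | .min => fun v => ⟨minSet (v 0).1, (v 0).2.subset (minSet_subset _)⟩
    | .max => fun v => ⟨maxSet (v 0).1, (v 0).2.subset (maxSet_subset _)⟩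
    | .sinv => fun v => ⟨sInvSet (v 0).1 (v 1).1, (v 0).2.subset (sInvSet_subset _ _)⟩
  RelMap {n} r := Empty.elim r

/-- `WSO(α)` as an `L_MO`-structure, for any linearly ordered `α` (here specialised to `𝕀`). -/
instance finSubLMO : LMO.Structure FinSub where
  funMap {n} f := Empty.elim f
  RelMap {n} r :=
    match r with
    | .sub => fun v => (v 0).1 ⊆ (v 1).1
    | .elt => fun v => ∃ a ∈ (v 0).1, ∃ b ∈ (v 1).1, a < b

/-- `MSO(α)`: the `L_MO`-structure on the full powerset of a linear order `α`. -/
instance powersetLMO (α : Type*) [LinearOrder α] : LMO.Structure (Set α) where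
  funMap {n} f := Empty.elim f
  RelMap {n} r :=
    match r with
    | .sub => fun v => v 0 ⊆ v 1
    | .elt => fun v => ∃ a ∈ v 0, ∃ b ∈ v 1, a < b

/-! ### `MSO(n)` and the pseudofinite theory `T_MSOFin` -/

/-- `MSO(n)` as an `L_MSOFin`-structure on the powerset of `{0, …, n-1}`. -/
instance msoFinStructure (n : ℕ) : LMSOFin.Structure (Set (Fin n)) where
  funMap {m} f :=
    match f with
    | .union => fun v => v 0 ∪ v 1
    | .inter => fun v => v 0 ∩ v 1
    | .bot => fun _ => ∅
    | .zero => fun _ => {i : Fin n | (i : ℕ) = 0}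
    | .zeroStar => fun _ => {i : Fin n | (i : ℕ) = n - 1}
    | .sinv => fun v => {i : Fin n | ∃ j : Fin n, (j : ℕ) = (i : ℕ) + 1 ∧ j ∈ v 0}
  RelMap {m} r := Empty.elim r

/-- The pseudofinite monadic second order theory of linear order: the set of `L_MSOFin`-sentences
true in `MSO(n)` for every `n`. -/
def TMSOFin : LMSOFin.Theory := {φ : LMSOFin.Sentence | ∀ n : ℕ, Set (Fin n) ⊨ φ}

/-! ### Abstract `L_MO`-structures: atoms and interval restrictions -/

section LMOAbstract

variable {M : Type*} [LMO.Structure M]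

/-- The interpretation of `⊆` in an `L_MO`-structure. -/
def mSub (a b : M) : Prop := RelMap (L := LMO) MORel.sub ![a, b]

/-- The interpretation of `∃<` in an `L_MO`-structure. -/
def mLt (a b : M) : Prop := RelMap (L := LMO) MORel.elt ![a, b]

/-- `b` is the least element of the partial order `(M, ⊆)`. -/
def IsBotM (b : M) : Prop := ∀ x : M, mSub b x

/-- `a` is an atom of `(M, ⊆)`: a minimal element strictly above the least element. -/
def IsAtomM (a : M) : Prop :=
  ∃ b : M, IsBotM b ∧ a ≠ b ∧ ∀ x : M, mSub x a → x = a ∨ x = b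

/-- The carrier `{B : M ∣ every atom X ⊆ B satisfies (i ∃< X ∨ X = i) ∧ X ∃< j}`
of the restriction `M ↾ [i,j)`. -/
def intervalRes (i j : M) : Set M :=
  {B : M | ∀ X : M, IsAtomM X → mSub X B → (mLt i X ∨ X = i) ∧ mLt X j}

/-- The `L_MO`-structure induced on a subset of an `L_MO`-structure. -/
def inducedLMO (s : Set M) : LMO.Structure s where
  funMap {n} f := Empty.elim f
  RelMap {n} r v := RelMap (M := M) r fun k => (v k : M)

end LMOAbstract

/-! ### Abstract `L_WSO`-structures, restrictions to elements -/

section LWSOAbstract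

variable {M : Type*} [LWSO.Structure M]

/-- The interpretation of `∪` in an `L_WSO`-structure. -/
def wUnion (a b : M) : M := funMap (L := LWSO) WSOFunc.union ![a, b]

/-- The interpretation of `∩` in an `L_WSO`-structure. -/
def wInter (a b : M) : M := funMap (L := LWSO) WSOFunc.inter ![a, b]

/-- The interpretation of `⊥` in an `L_WSO`-structure. -/
def wBot : M := funMap (L := LWSO) (M := M) WSOFunc.bot ![]

/-- The interpretation of `𝟎` in an `L_WSO`-structure. -/
def wZero : M := funMap (L := LWSO) (M := M) WSOFunc.zero ![]

/-- The interpretation of `min` in an `L_WSO`-structure. -/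
def wMin (a : M) : M := funMap (L := LWSO) WSOFunc.min ![a]

/-- The interpretation of `max` in an `L_WSO`-structure. -/
def wMax (a : M) : M := funMap (L := LWSO) WSOFunc.max ![a]

/-- The interpretation of `𝔰⁻¹` in an `L_WSO`-structure. -/
def wSInv (a b : M) : M := funMap (L := LWSO) WSOFunc.sinv ![a, b]

variable (M)

/-- The universe `{B : M ∣ B ∩ A = B}` of the restriction `M ↾ A`. -/
def Res (A : M) : Type _ := {B : M // wInter B A = B}

/-- The (true in every model of `Th(WSO(𝕀))`) closure conditions saying that
`{B : M ∣ B ∩ A = B}` is closed under the operations of the restricted structure `M ↾ A`. -/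
structure ResClosed (A : M) : Prop where
  union : ∀ B C : M, wInter B A = B → wInter C A = C → wInter (wUnion B C) A = wUnion B C
  inter : ∀ B C : M, wInter B A = B → wInter C A = C → wInter (wInter B C) A = wInter B C
  bot : wInter (wBot : M) A = wBot
  zero : wInter (wMin A) A = wMin A
  zeroStar : wInter (wMax A) A = wMax A
  sinv : ∀ B : M, wInter B A = B → wInter (wSInv A B) A = wSInv A B

variable {M}

/-- The restriction `M ↾ A` as an `L_MSOFin`-structure: `∪`, `∩`, `⊥` are inherited from `M`,
`𝟎` is `min(A)`, `𝟎*` is `max(A)`, and `s⁻¹` is `B ↦ 𝔰⁻¹(A, B)` computed in `M`. -/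
def resStructure {A : M} (hc : ResClosed M A) : LMSOFin.Structure (Res M A) where
  funMap {m} f :=
    match f with
    | .union => fun v => ⟨wUnion (v 0).1 (v 1).1, hc.union _ _ (v 0).2 (v 1).2⟩
    | .inter => fun v => ⟨wInter (v 0).1 (v 1).1, hc.inter _ _ (v 0).2 (v 1).2⟩
    | .bot => fun _ => ⟨wBot, hc.bot⟩
    | .zero => fun _ => ⟨wMin A, hc.zero⟩
    | .zeroStar => fun _ => ⟨wMax A, hc.zeroStar⟩
    | .sinv => fun v => ⟨wSInv A (v 0).1, hc.sinv _ (v 0).2⟩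
  RelMap {m} r := Empty.elim r

/-- `⌊Ā⌋ = 𝟎 ∪ A₁ ∪ … ∪ Aₙ`, computed in `M`. -/
def wFloor {n : ℕ} (A : Fin n → M) : M := (List.ofFn A).foldl wUnion wZero

end LWSOAbstract

/-! ### Complexity classes of formulas -/

section Complexity

variable {L : Language} {α : Type*}

/-- Positive existential formulas: those built from atomic formulas using only `∧`, `∨`
and `∃`. -/
inductive IsPosEx : {n : ℕ} → L.BoundedFormula α n → Prop
  | equal {n} (t₁ t₂ : L.Term (α ⊕ Fin n)) : IsPosEx (BoundedFormula.equal t₁ t₂)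
  | rel {n k} (R : L.Relations k) (ts : Fin k → L.Term (α ⊕ Fin n)) :
      IsPosEx (BoundedFormula.rel R ts)
  | inf {n} {φ ψ : L.BoundedFormula α n} : IsPosEx φ → IsPosEx ψ → IsPosEx (φ ⊓ ψ)
  | sup {n} {φ ψ : L.BoundedFormula α n} : IsPosEx φ → IsPosEx ψ → IsPosEx (φ ⊔ ψ)
  | ex {n} {φ : L.BoundedFormula α (n + 1)} : IsPosEx φ → IsPosEx φ.ex

/-- Existential formulas: a block of existential quantifiers applied to a
quantifier-free formula. -/
inductive IsExist : {n : ℕ} → L.BoundedFormula α n → Prop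
  | of_isQF {n} {φ : L.BoundedFormula α n} : φ.IsQF → IsExist φ
  | ex {n} {φ : L.BoundedFormula α (n + 1)} : IsExist φ → IsExist φ.ex

end Complexity

/-! ### Finite unions of closed intervals and the structure `L(𝕀)` -/

/-- `A` is a finite union of closed intervals of `𝕀` (each of the form `[i,j]` or `[i,∞)`;
intervals of the form `(-∞, j]` coincide with `[0, j]` since `𝕀` has least element `0`). -/
def IsFCI (A : Set II) : Prop :=
  ∃ (k : ℕ) (f : Fin k → Set II),
    (∀ m : Fin k, (∃ i j : II, f m = Set.Icc i j) ∨ ∃ i : II, f m = Set.Ici i) ∧ A = ⋃ m, f m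

/-- The universe of `L(𝕀)`: finite unions of closed intervals of `𝕀`. -/
abbrev FCI : Type := {A : Set II // IsFCI A}

/-- The set of left endpoints of `A`. -/
def lSet (A : Set II) : Set II := {i ∈ A | i = 0 ∨ ∃ i' < i, Set.Ioo i' i ∩ A = ∅}

/-- The set of right endpoints of `A`. -/
def rSet (A : Set II) : Set II := {i ∈ A | ∃ i'', i < i'' ∧ Set.Ioo i i'' ∩ A = ∅}

lemma isFCI_empty : IsFCI (∅ : Set II) := ⟨0, Fin.elim0, fun m => m.elim0, by simp⟩

lemma isFCI_singleton (i : II) : IsFCI {i} :=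
  ⟨1, fun _ => Set.Icc i i, fun _ => Or.inl ⟨i, i, rfl⟩, by simp⟩

lemma IsFCI.union {A B : Set II} (hA : IsFCI A) (hB : IsFCI B) : IsFCI (A ∪ B) := by
  obtain ⟨k, f, hf, rfl⟩ := hA
  obtain ⟨l, g, hg, rfl⟩ := hB
  refine ⟨k + l, fun m => Sum.elim f g (finSumFinEquiv.symm m), fun m => ?_, ?_⟩
  · dsimp only
    rcases finSumFinEquiv.symm m with i | j
    · exact hf i
    · exact hg j
  · ext x
    simp only [Set.mem_union, Set.mem_iUnion]
    constructor
    · rintro (⟨i, hi⟩ | ⟨j, hj⟩)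
      · exact ⟨finSumFinEquiv (Sum.inl i), by simpa using hi⟩
      · exact ⟨finSumFinEquiv (Sum.inr j), by simpa using hj⟩
    · rintro ⟨m, hm⟩
      rcases h : finSumFinEquiv.symm m with i | j
      · rw [h] at hm; exact Or.inl ⟨i, hm⟩
      · rw [h] at hm; exact Or.inr ⟨j, hm⟩

lemma Icc_inter_Ici' {a b c : II} : Set.Icc a b ∩ Set.Ici c = Set.Icc (a ⊔ c) b := by
  ext x
  simp only [Set.mem_inter_iff, Set.mem_Icc, Set.mem_Ici, sup_le_iff]
  tauto

lemma IsFCI.inter {A B : Set II} (hA : IsFCI A) (hB : IsFCI B) : IsFCI (A ∩ B) := by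
  obtain ⟨k, f, hf, rfl⟩ := hA
  obtain ⟨l, g, hg, rfl⟩ := hB
  refine ⟨k * l, fun m => f (finProdFinEquiv.symm m).1 ∩ g (finProdFinEquiv.symm m).2,
    fun m => ?_, ?_⟩
  · dsimp only
    rcases hf (finProdFinEquiv.symm m).1 with ⟨a, b, hab⟩ | ⟨a, ha⟩ <;>
      rcases hg (finProdFinEquiv.symm m).2 with ⟨c, d, hcd⟩ | ⟨c, hc⟩
    · exact Or.inl ⟨a ⊔ c, b ⊓ d, by rw [hab, hcd, Set.Icc_inter_Icc]⟩
    · exact Or.inl ⟨a ⊔ c, b, by rw [hab, hc, Icc_inter_Ici']⟩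
    · exact Or.inl ⟨c ⊔ a, d, by rw [ha, hcd, Set.inter_comm, Icc_inter_Ici']⟩
    · exact Or.inr ⟨a ⊔ c, by rw [ha, hc, Set.Ici_inter_Ici]⟩
  · ext x
    simp only [Set.mem_inter_iff, Set.mem_iUnion]
    constructor
    · rintro ⟨⟨i, hi⟩, ⟨j, hj⟩⟩
      exact ⟨finProdFinEquiv (i, j), by simpa using ⟨hi, hj⟩⟩
    · rintro ⟨m, hm⟩
      exact ⟨⟨_, hm.1⟩, ⟨_, hm.2⟩⟩

lemma isFCI_minSet (A : Set II) : IsFCI (minSet A) := by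
  rcases (minSet_subsingleton A).eq_empty_or_singleton with h | ⟨i, h⟩
  · rw [h]; exact isFCI_empty
  · rw [h]; exact isFCI_singleton i

lemma isFCI_maxSet (A : Set II) : IsFCI (maxSet A) := by
  rcases (maxSet_subsingleton A).eq_empty_or_singleton with h | ⟨i, h⟩
  · rw [h]; exact isFCI_empty
  · rw [h]; exact isFCI_singleton i

lemma finite_isFCI {A : Set II} (hA : A.Finite) : IsFCI A :=
  Set.Finite.induction_on A hA isFCI_empty
    (fun _ _ ih => by rw [Set.insert_eq]; exact (isFCI_singleton _).union ih)

lemma IsFCI.lSet_finite {A : Set II} (hA : IsFCI A) : (lSet A).Finite := by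
  obtain ⟨k, f, hf, rfl⟩ := hA
  have hsub : lSet (⋃ m, f m) ⊆ {0} ∪ ⋃ m, minSet (f m) := by
    rintro i ⟨hiA, hi⟩
    rcases hi with rfl | ⟨i', hi'lt, hgap⟩
    · exact Set.mem_union_left _ rfl
    · obtain ⟨m, him⟩ := Set.mem_iUnion.1 hiA
      refine Set.mem_union_right _ (Set.mem_iUnion.2 ⟨m, him, fun j hj => ?_⟩)
      by_contra hji
      push_neg at hji
      obtain ⟨x, hx1, hx2⟩ := exists_between (max_lt hi'lt hji : max i' j < i)
      have hxfm : x ∈ f m := by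
        rcases hf m with ⟨a, b, hab⟩ | ⟨a, ha⟩
        · rw [hab] at him hj ⊢
          exact ⟨hj.1.trans ((le_max_right i' j).trans hx1.le), hx2.le.trans him.2⟩
        · rw [ha] at hj ⊢
          exact hj.trans ((le_max_right i' j).trans hx1.le)
      have hmem : x ∈ Set.Ioo i' i ∩ ⋃ m, f m :=
        ⟨⟨(le_max_left i' j).trans_lt hx1, hx2⟩, Set.mem_iUnion.2 ⟨m, hxfm⟩⟩
      rw [hgap] at hmem
      exact hmem
  exact ((Set.finite_singleton 0).union
    (Set.finite_iUnion fun m => (minSet_subsingleton (f m)).finite)).subset hsub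

lemma IsFCI.rSet_finite {A : Set II} (hA : IsFCI A) : (rSet A).Finite := by
  obtain ⟨k, f, hf, rfl⟩ := hA
  have hsub : rSet (⋃ m, f m) ⊆ ⋃ m, maxSet (f m) := by
    rintro i ⟨hiA, i'', hi''gt, hgap⟩
    obtain ⟨m, him⟩ := Set.mem_iUnion.1 hiA
    refine Set.mem_iUnion.2 ⟨m, him, fun j hj => ?_⟩
    by_contra hij
    push_neg at hij
    obtain ⟨x, hx1, hx2⟩ := exists_between (lt_min hi''gt hij : i < min i'' j)
    have hxfm : x ∈ f m := by
      rcases hf m with ⟨a, b, hab⟩ | ⟨a, ha⟩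
      · rw [hab] at him hj ⊢
        exact ⟨him.1.trans hx1.le, (hx2.le.trans (min_le_right i'' j)).trans hj.2⟩
      · rw [ha] at him ⊢
        exact him.trans hx1.le
    have hmem : x ∈ Set.Ioo i i'' ∩ ⋃ m, f m :=
      ⟨⟨hx1, hx2.trans_le (min_le_left i'' j)⟩, Set.mem_iUnion.2 ⟨m, hxfm⟩⟩
    rw [hgap] at hmem
    exact hmem
  exact (Set.finite_iUnion fun m => (maxSet_subsingleton (f m)).finite).subset hsub

/-- `L(𝕀)` as an `L_L`-structure. -/
instance fciLL : LL.Structure FCI where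
  funMap {m} f :=
    match f with
    | .union => fun v => ⟨(v 0).1 ∪ (v 1).1, (v 0).2.union (v 1).2⟩
    | .inter => fun v => ⟨(v 0).1 ∩ (v 1).1, (v 0).2.inter (v 1).2⟩
    | .bot => fun _ => ⟨∅, isFCI_empty⟩
    | .zero => fun _ => ⟨{0}, isFCI_singleton 0⟩
    | .min => fun v => ⟨minSet (v 0).1, isFCI_minSet _⟩
    | .max => fun v => ⟨maxSet (v 0).1, isFCI_maxSet _⟩
    | .left => fun v => ⟨lSet (v 0).1, finite_isFCI (v 0).2.lSet_finite⟩
    | .right => fun v => ⟨rSet (v 0).1, finite_isFCI (v 0).2.rSet_finite⟩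
  RelMap {m} r := Empty.elim r

universe u v


open Set in
private lemma exists_min_II {s : Set II} (hs : s.Finite) (hne : s.Nonempty) :
    ∃ a ∈ s, ∀ b ∈ s, a ≤ b := Set.exists_min_image s id hs hne

open Set in
private lemma exists_max_II {s : Set II} (hs : s.Finite) (hne : s.Nonempty) :
    ∃ a ∈ s, ∀ b ∈ s, b ≤ a := Set.exists_max_image s id hs hne

/-- Every point of a nonempty FCI set can be connected leftwards to a left endpoint. -/
lemma lSet_reach {A : Set II} (hA : IsFCI A) {x : II} (hx : x ∈ A) :
    ∃ b ∈ lSet A, b ≤ x ∧ Set.Icc b x ⊆ A := by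
  classical
  obtain ⟨k, f, hf, hU⟩ := hA
  have hdata : ∀ m : Fin k, ∃ a c : II, f m = Set.Icc a c ∨ f m = Set.Ici a := by
    intro m; rcases hf m with ⟨i, j, h⟩ | ⟨i, h⟩
    exacts [⟨i, j, Or.inl h⟩, ⟨i, i, Or.inr h⟩]
  choose lep rep hlr using hdata
  have hmemA : ∀ y : II, y ∈ A ↔ ∃ m, y ∈ f m := by
    intro y; rw [hU]; exact Set.mem_iUnion
  set S : Set II := {a | (a = x ∨ ∃ m, a = lep m) ∧ a ≤ x ∧ Set.Icc a x ⊆ A} with hS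
  have hSfin : S.Finite := by
    refine (((Set.finite_range lep).insert x).subset ?_)
    rintro a ⟨rfl | ⟨m, rfl⟩, -, -⟩
    · exact Set.mem_insert _ _
    · exact Set.mem_insert_of_mem _ ⟨m, rfl⟩
  have hSne : S.Nonempty := ⟨x, Or.inl rfl, le_refl x, by
    intro z hz; rcases le_antisymm hz.2 hz.1 with rfl; exact hx⟩
  obtain ⟨b, ⟨hbtag, hbx, hbIcc⟩, hbmin⟩ := exists_min_II hSfin hSne
  have hbA : b ∈ A := hbIcc ⟨le_refl b, hbx⟩
  refine ⟨b, ⟨hbA, ?_⟩, hbx, hbIcc⟩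
  rcases Classical.em (b = 0) with hb0 | hb0
  · exact Or.inl hb0
  right
  have hb0' : 0 < b := lt_of_le_of_ne (zero_le : (0 : II) ≤ b) (Ne.symm hb0)
  set P : Set II := insert 0 {g | (∃ m, g = lep m ∨ g = rep m) ∧ g < b} with hP
  have hPfin : P.Finite := by
    refine (((Set.finite_range lep).union (Set.finite_range rep)).insert 0).subset ?_
    rintro g (rfl | ⟨⟨m, rfl | rfl⟩, -⟩)
    · exact Set.mem_insert _ _
    · exact Set.mem_insert_of_mem _ (Or.inl ⟨m, rfl⟩)
    · exact Set.mem_insert_of_mem _ (Or.inr ⟨m, rfl⟩)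
  obtain ⟨p, hpP, hpmax⟩ := exists_max_II hPfin ⟨0, Set.mem_insert _ _⟩
  have hpb : p < b := by
    rcases hpP with rfl | ⟨-, h⟩
    · exact hb0'
    · exact h
  refine ⟨p, hpb, Set.eq_empty_iff_forall_notMem.2 ?_⟩
  rintro y ⟨⟨hpy, hyb⟩, hyA⟩
  obtain ⟨m, hym⟩ := (hmemA y).1 hyA
  rcases hlr m with hIcc | hIci
  · rw [hIcc] at hym
    have hlepb : lep m < b := lt_of_le_of_lt hym.1 hyb
    have hrep : b ≤ rep m := by
      by_contra h
      push_neg at h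
      have h1 : rep m ≤ p := hpmax _ (Set.mem_insert_of_mem _ ⟨⟨m, Or.inr rfl⟩, h⟩)
      exact absurd (hpy.trans_le (hym.2.trans h1)) (lt_irrefl p)
    have hsub : Set.Icc (lep m) x ⊆ A := by
      intro z hz
      rcases le_or_gt z (rep m) with hzb | hzb
      · exact (hmemA z).2 ⟨m, hIcc ▸ ⟨hz.1, hzb⟩⟩
      · exact hbIcc ⟨hrep.trans hzb.le, hz.2⟩
    have : b ≤ lep m := hbmin _ ⟨Or.inr ⟨m, rfl⟩, hlepb.le.trans hbx, hsub⟩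
    exact absurd this (not_le.2 hlepb)
  · rw [hIci] at hym
    have hlepb : lep m < b := lt_of_le_of_lt hym hyb
    have hsub : Set.Icc (lep m) x ⊆ A := by
      intro z hz
      exact (hmemA z).2 ⟨m, hIci ▸ hz.1⟩
    have : b ≤ lep m := hbmin _ ⟨Or.inr ⟨m, rfl⟩, hlepb.le.trans hbx, hsub⟩
    exact absurd this (not_le.2 hlepb)

/-- Every point of an FCI set connects rightwards to a right endpoint, or the set is
unbounded from that point on. -/
lemma rSet_reach {A : Set II} (hA : IsFCI A) {x : II} (hx : x ∈ A) :
    (∃ c ∈ rSet A, x ≤ c ∧ Set.Icc x c ⊆ A) ∨ Set.Ici x ⊆ A := by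
  classical
  obtain ⟨k, f, hf, hU⟩ := hA
  have hdata : ∀ m : Fin k, ∃ a c : II, f m = Set.Icc a c ∨ f m = Set.Ici a := by
    intro m; rcases hf m with ⟨i, j, h⟩ | ⟨i, h⟩
    exacts [⟨i, j, Or.inl h⟩, ⟨i, i, Or.inr h⟩]
  choose lep rep hlr using hdata
  have hmemA : ∀ y : II, y ∈ A ↔ ∃ m, y ∈ f m := by
    intro y; rw [hU]; exact Set.mem_iUnion
  set S : Set II := {c | (c = x ∨ ∃ m, c = rep m) ∧ x ≤ c ∧ Set.Icc x c ⊆ A} with hS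
  have hSfin : S.Finite := by
    refine (((Set.finite_range rep).insert x).subset ?_)
    rintro a ⟨rfl | ⟨m, rfl⟩, -, -⟩
    · exact Set.mem_insert _ _
    · exact Set.mem_insert_of_mem _ ⟨m, rfl⟩
  have hSne : S.Nonempty := ⟨x, Or.inl rfl, le_refl x, by
    intro z hz; rcases le_antisymm hz.2 hz.1 with rfl; exact hx⟩
  obtain ⟨c, ⟨hctag, hxc, hcIcc⟩, hcmax⟩ := exists_max_II hSfin hSne
  have hcA : c ∈ A := hcIcc ⟨hxc, le_refl c⟩
  rcases Classical.em (∃ m, f m = Set.Ici (lep m) ∧ lep m ≤ c) with hUnb | hUnb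
  · obtain ⟨m, hm, hlepc⟩ := hUnb
    right
    intro z hz
    rcases le_or_gt z c with hzc | hzc
    · exact hcIcc ⟨hz, hzc⟩
    · exact (hmemA z).2 ⟨m, hm ▸ (hlepc.trans hzc.le)⟩
  · left
    refine ⟨c, ⟨hcA, ?_⟩, hxc, hcIcc⟩
    have hq : ∃ q, c < q ∧ ∀ g : II, (∃ m, g = lep m ∨ g = rep m) → c < g → q ≤ g := by
      set Q : Set II := {g | (∃ m, g = lep m ∨ g = rep m) ∧ c < g} with hQ
      have hQfin : Q.Finite := by
        refine ((Set.finite_range lep).union (Set.finite_range rep)).subset ?_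
        rintro g ⟨⟨m, rfl | rfl⟩, -⟩
        · exact Or.inl ⟨m, rfl⟩
        · exact Or.inr ⟨m, rfl⟩
      rcases Classical.em Q.Nonempty with hQne | hQne
      · obtain ⟨q, ⟨-, hcq⟩, hqmin⟩ := exists_min_II hQfin hQne
        exact ⟨q, hcq, fun g hg1 hg2 => hqmin g ⟨hg1, hg2⟩⟩
      · refine ⟨c + 1, lt_add_of_pos_right c one_pos, fun g hg1 hg2 => ?_⟩
        exact absurd ⟨g, hg1, hg2⟩ hQne
    obtain ⟨q, hcq, hqmin⟩ := hq
    refine ⟨q, hcq, Set.eq_empty_iff_forall_notMem.2 ?_⟩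
    rintro y ⟨⟨hcy, hyq⟩, hyA⟩
    obtain ⟨m, hym⟩ := (hmemA y).1 hyA
    have hlepc : lep m ≤ c := by
      by_contra h
      push_neg at h
      have h1 : lep m ≤ y := by
        rcases hlr m with hIcc | hIci
        · exact (hIcc ▸ hym : y ∈ Set.Icc (lep m) (rep m)).1
        · exact (hIci ▸ hym : y ∈ Set.Ici (lep m))
      exact absurd (hyq.trans_le ((hqmin _ ⟨m, Or.inl rfl⟩ h).trans h1)) (lt_irrefl y)
    rcases hlr m with hIcc | hIci
    · rw [hIcc] at hym
      have hrepc : c < rep m := hcy.trans_le hym.2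
      have hsub : Set.Icc x (rep m) ⊆ A := by
        intro z hz
        rcases le_or_gt z c with hzc | hzc
        · exact hcIcc ⟨hz.1, hzc⟩
        · exact (hmemA z).2 ⟨m, hIcc ▸ ⟨hlepc.trans hzc.le, hz.2⟩⟩
      have : rep m ≤ c := hcmax _ ⟨Or.inr ⟨m, rfl⟩, hxc.trans hrepc.le, hsub⟩
      exact absurd this (not_le.2 hrepc)
    · exact hUnb ⟨m, hIci, hlepc⟩

lemma forward_dir {A : Set II} (hA : IsFCI A) (hne : A ≠ ∅)
    (hB : (lSet A).Finite) (hC : (rSet A).Finite) :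
    lSet A ≠ ∅ ∧ (∃ m ∈ minSet (lSet A ∪ rSet A), m ∈ lSet A) ∧
      (((∃ m ∈ maxSet (lSet A ∪ rSet A), m ∈ rSet A) ∧
          sInvSet (lSet A ∪ rSet A) (rSet A \ lSet A) = lSet A \ rSet A) ∨
        ((∃ m ∈ maxSet (lSet A ∪ rSet A), m ∈ lSet A \ rSet A) ∧
          sInvSet (lSet A ∪ rSet A) (rSet A \ lSet A) ∪ maxSet (lSet A ∪ rSet A) =
            lSet A \ rSet A)) := by
  obtain ⟨x, hx⟩ := Set.nonempty_iff_ne_empty.2 hne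
  obtain ⟨b0, hb0, -, -⟩ := lSet_reach hA hx
  have hBne : lSet A ≠ ∅ := fun h => (h ▸ hb0 : b0 ∈ (∅ : Set II))
  have hD : (lSet A ∪ rSet A).Finite := hB.union hC
  have hDne : (lSet A ∪ rSet A).Nonempty := ⟨b0, Or.inl hb0⟩
  obtain ⟨m0, hm0D, hm0min⟩ := exists_min_II hD hDne
  have hm0B : m0 ∈ lSet A := by
    rcases hm0D with h | h
    · exact h
    · obtain ⟨b, hbB, hbm, -⟩ := lSet_reach hA h.1
      have : m0 ≤ b := hm0min b (Or.inl hbB)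
      rwa [le_antisymm hbm this] at hbB
  obtain ⟨M, hMD, hMmax⟩ := exists_max_II hD hDne
  -- (a1)
  have ha1 : ∀ i ∈ sInvSet (lSet A ∪ rSet A) (rSet A \ lSet A), i ∈ lSet A \ rSet A := by
    rintro i ⟨hiD, j, hjD, hij, hjmin, hjC, hjB⟩
    have hiC : i ∉ rSet A := by
      rintro ⟨hiA, i'', hii'', hgap⟩
      have hjA : j ∈ A := hjC.1
      have hj0 : j ≠ 0 := fun h => hjB ⟨hjA, Or.inl h⟩
      have hIoo : (Set.Ioo i j ∩ A).Nonempty := by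
        rcases Set.eq_empty_or_nonempty (Set.Ioo i j ∩ A) with he | hne'
        · exact absurd ⟨hjA, Or.inr ⟨i, hij, he⟩⟩ hjB
        · exact hne'
      obtain ⟨y, ⟨hiy, hyj⟩, hyA⟩ := hIoo
      obtain ⟨b, hbB, hby, hbIcc⟩ := lSet_reach hA hyA
      rcases le_or_gt b i with hbi | hib
      · obtain ⟨z, hz1, hz2⟩ := exists_between (lt_min hii'' hiy)
        exact (hgap ▸ ⟨⟨hz1, hz2.trans_le (min_le_left _ _)⟩,
          hbIcc ⟨hbi.trans hz1.le, (hz2.trans_le (min_le_right _ _)).le⟩⟩ :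
          z ∈ (∅ : Set II))
      · exact absurd ((hjmin b (Or.inl hbB) hib).trans hby) (not_le.2 hyj)
    rcases hiD with h | h
    · exact ⟨h, hiC⟩
    · exact absurd h hiC
  -- (a2)
  have ha2 : ∀ b ∈ lSet A \ rSet A, b ∈ sInvSet (lSet A ∪ rSet A) (rSet A \ lSet A) ∨
      (b ∈ maxSet (lSet A ∪ rSet A) ∧ Set.Ici b ⊆ A) := by
    rintro b ⟨hbB, hbC⟩
    have hbA : b ∈ A := hbB.1
    rcases rSet_reach hA hbA with ⟨c, hcC, hbc, hIcc⟩ | hIci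
    · have hbc' : b < c := hbc.lt_of_ne (fun h => hbC (h ▸ hcC))
      have hfin : ({d ∈ lSet A ∪ rSet A | b < d} : Set II).Finite :=
        hD.subset (Set.sep_subset _ _)
      obtain ⟨j, ⟨hjD, hbj⟩, hjmin⟩ := exists_min_II hfin ⟨c, Or.inr hcC, hbc'⟩
      have hjc : j ≤ c := hjmin c ⟨Or.inr hcC, hbc'⟩
      have hjB : j ∉ lSet A := by
        rintro ⟨hjA, h0 | ⟨i', hi'j, hgap⟩⟩
        · exact absurd (h0 ▸ hbj) (not_lt.2 (zero_le : (0 : II) ≤ b))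
        · obtain ⟨z, hz1, hz2⟩ := exists_between (max_lt hi'j hbj)
          exact (hgap ▸ ⟨⟨(le_max_left i' b).trans_lt hz1, hz2⟩,
            hIcc ⟨(le_max_right i' b).trans hz1.le, hz2.le.trans hjc⟩⟩ : z ∈ (∅ : Set II))
      have hjC : j ∈ rSet A := by
        rcases hjD with h | h
        · exact absurd h hjB
        · exact h
      exact Or.inl ⟨Or.inl hbB, j, hjD, hbj, fun k hk hbk => hjmin k ⟨hk, hbk⟩, hjC, hjB⟩
    · right
      have hmax : ∀ d ∈ lSet A ∪ rSet A, d ≤ b := by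
        intro d hd
        by_contra hbd
        push_neg at hbd
        rcases hd with hdB | hdC
        · obtain ⟨hdA, h0 | ⟨i', hi'd, hgap⟩⟩ := hdB
          · exact absurd (h0 ▸ hbd) (not_lt.2 (zero_le : (0 : II) ≤ b))
          · obtain ⟨z, hz1, hz2⟩ := exists_between (max_lt hi'd hbd)
            exact (hgap ▸ ⟨⟨(le_max_left i' b).trans_lt hz1, hz2⟩,
              hIci ((le_max_right i' b).trans hz1.le)⟩ : z ∈ (∅ : Set II))
        · obtain ⟨hdA, d'', hdd, hgap⟩ := hdC
          obtain ⟨z, hz1, hz2⟩ := exists_between hdd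
          exact (hgap ▸ ⟨⟨hz1, hz2⟩, hIci (hbd.le.trans hz1.le)⟩ : z ∈ (∅ : Set II))
      exact ⟨⟨Or.inl hbB, hmax⟩, hIci⟩
  refine ⟨hBne, ⟨m0, ⟨hm0D, hm0min⟩, hm0B⟩, ?_⟩
  rcases Classical.em (M ∈ rSet A) with hMC | hMC
  · left
    refine ⟨⟨M, ⟨hMD, hMmax⟩, hMC⟩, Set.Subset.antisymm (fun i hi => ha1 i hi) ?_⟩
    intro b hb
    rcases ha2 b hb with h | ⟨hbmax, hIci⟩
    · exact h
    · exfalso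
      obtain ⟨hMA, M'', hMM, hgap⟩ := hMC
      obtain ⟨z, hz1, hz2⟩ := exists_between hMM
      have hbM : b ≤ M := hMmax b (Or.inl hb.1)
      exact (hgap ▸ ⟨⟨hz1, hz2⟩, hIci (hbM.trans hz1.le)⟩ : z ∈ (∅ : Set II))
  · right
    have hMB : M ∈ lSet A := by
      rcases hMD with h | h
      · exact h
      · exact absurd h hMC
    refine ⟨⟨M, ⟨hMD, hMmax⟩, hMB, hMC⟩, Set.Subset.antisymm ?_ ?_⟩
    · rintro i (hi | hi)
      · exact ha1 i hi
      · have : i = M := le_antisymm (hMmax i hi.1) (hi.2 M hMD)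
        rw [this]; exact ⟨hMB, hMC⟩
    · intro b hb
      rcases ha2 b hb with h | ⟨hbmax, -⟩
      · exact Or.inl h
      · exact Or.inr hbmax

lemma isFCI_biUnion (g : II → Set II) {s : Set II} (hs : s.Finite) :
    (∀ b ∈ s, (∃ i j, g b = Set.Icc i j) ∨ ∃ i, g b = Set.Ici i) →
    IsFCI (⋃ b ∈ s, g b) := by
  refine Set.Finite.induction_on s hs (fun _ => by simpa using isFCI_empty) ?_
  intro a t ha htf ih hg
  rw [Set.biUnion_insert]
  exact IsFCI.union ⟨1, fun _ => g a, fun _ => hg a (Set.mem_insert _ _), (Set.iUnion_const (g a)).symm⟩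
    (ih fun b hb => hg b (Set.mem_insert_of_mem _ hb))

lemma backward_dir (B C : Set II) (hB : B.Finite) (hC : C.Finite)
    (hBne : B ≠ ∅) (hmin : ∃ m ∈ minSet (B ∪ C), m ∈ B)
    (hcase : ((∃ m ∈ maxSet (B ∪ C), m ∈ C) ∧ sInvSet (B ∪ C) (C \ B) = B \ C) ∨
      ((∃ m ∈ maxSet (B ∪ C), m ∈ B \ C) ∧
        sInvSet (B ∪ C) (C \ B) ∪ maxSet (B ∪ C) = B \ C)) :
    ∃ A : Set II, IsFCI A ∧ A ≠ ∅ ∧ lSet A = B ∧ rSet A = C := by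
  classical
  have hD : (B ∪ C).Finite := hB.union hC
  obtain ⟨m0, ⟨hm0D, hm0min⟩, hm0B⟩ := hmin
  -- consequences of the case hypothesis
  have hsubBC : sInvSet (B ∪ C) (C \ B) ⊆ B \ C := by
    rcases hcase with ⟨-, hS⟩ | ⟨-, hS⟩
    · exact hS.le
    · exact fun i hi => hS ▸ Set.mem_union_left _ hi
  have hmem2 : ∀ b ∈ B \ C, b ∈ sInvSet (B ∪ C) (C \ B) ∨ b ∈ maxSet (B ∪ C) := by
    rcases hcase with ⟨-, hS⟩ | ⟨-, hS⟩
    · exact fun b hb => Or.inl (hS.symm ▸ hb)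
    · exact fun b hb => (hS.symm ▸ hb : b ∈ _ ∪ _)
  -- the successor function on B ∪ C
  have hsuccEx : ∀ b : II, ∃ j : II, ({d ∈ B ∪ C | b < d} : Set II).Nonempty →
      (j ∈ B ∪ C ∧ b < j ∧ ∀ k ∈ B ∪ C, b < k → j ≤ k) := by
    intro b
    rcases Classical.em (({d ∈ B ∪ C | b < d} : Set II).Nonempty) with h | h
    · obtain ⟨j, ⟨hjD, hbj⟩, hjmin⟩ := exists_min_II (hD.subset (Set.sep_subset _ _)) h
      exact ⟨j, fun _ => ⟨hjD, hbj, fun k hk hbk => hjmin k ⟨hk, hbk⟩⟩⟩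
    · exact ⟨0, fun h' => absurd h' h⟩
  choose succ hsucc using hsuccEx
  obtain ⟨I, hI1, hI2⟩ : ∃ I : II → Set II,
      (∀ b, ({d ∈ B ∪ C | b < d} : Set II).Nonempty → I b = Set.Icc b (succ b)) ∧
      (∀ b, ¬({d ∈ B ∪ C | b < d} : Set II).Nonempty → I b = Set.Ici b) :=
    ⟨fun b => if h : ({d ∈ B ∪ C | b < d} : Set II).Nonempty then Set.Icc b (succ b)
      else Set.Ici b, fun b h => dif_pos h, fun b h => dif_neg h⟩
  have hIlow : ∀ b x, x ∈ I b → b ≤ x := by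
    intro b x hx
    rcases Classical.em (({d ∈ B ∪ C | b < d} : Set II).Nonempty) with h | h
    · rw [hI1 b h] at hx; exact hx.1
    · rw [hI2 b h] at hx; exact hx
  have hK1 : ∀ b ∈ B \ C, ∀ d ∈ B ∪ C, b < d →
      succ b ∈ C \ B ∧ succ b ∈ B ∪ C ∧ b < succ b ∧
        (∀ k ∈ B ∪ C, b < k → succ b ≤ k) := by
    intro b hb d hd hbd
    have hne' : ({x ∈ B ∪ C | b < x} : Set II).Nonempty := ⟨d, hd, hbd⟩
    obtain ⟨hsD, hbs, hsmin⟩ := hsucc b hne'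
    rcases hmem2 b hb with hs | hmax
    · obtain ⟨-, j, hjD, hbj, hjmin, hjCB⟩ := hs
      have hj : j = succ b := le_antisymm (hjmin _ hsD hbs) (hsmin _ hjD hbj)
      exact ⟨hj ▸ hjCB, hsD, hbs, hsmin⟩
    · exact absurd hbd (not_lt.2 (hmax.2 d hd))
  have hmemA : ∀ x : II, x ∈ B ∪ ⋃ b ∈ B \ C, I b ↔ x ∈ B ∨ ∃ b ∈ B \ C, x ∈ I b := by
    intro x; simp only [Set.mem_union, Set.mem_iUnion, exists_prop]
  refine ⟨B ∪ ⋃ b ∈ B \ C, I b, ?_, ?_, ?_, ?_⟩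
  · -- IsFCI
    refine (finite_isFCI hB).union (isFCI_biUnion I (hB.subset Set.diff_subset) ?_)
    intro b hb
    rcases Classical.em (({d ∈ B ∪ C | b < d} : Set II).Nonempty) with h | h
    · exact Or.inl ⟨b, succ b, hI1 b h⟩
    · exact Or.inr ⟨b, hI2 b h⟩
  · -- nonempty
    obtain ⟨b0, hb0⟩ := Set.nonempty_iff_ne_empty.2 hBne
    exact fun h => Set.eq_empty_iff_forall_notMem.1 h b0 (Or.inl hb0)
  · -- lSet = B
    apply Set.Subset.antisymm
    · rintro i ⟨hiA, hcond⟩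
      rcases (hmemA i).1 hiA with hiB | ⟨b', hb', hyI⟩
      · exact hiB
      · rcases eq_or_lt_of_le (hIlow b' i hyI) with heq | hlt
        · exact heq ▸ hb'.1
        · exfalso
          rcases hcond with h0 | ⟨i', hi'i, hgap⟩
          · exact absurd (h0 ▸ hlt) (not_lt.2 (zero_le : (0 : II) ≤ b'))
          · obtain ⟨z, hz1, hz2⟩ := exists_between (max_lt hi'i hlt)
            have hzI : z ∈ I b' := by
              rcases Classical.em (({d ∈ B ∪ C | b' < d} : Set II).Nonempty) with h | h
              · rw [hI1 _ h] at hyI ⊢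
                exact ⟨(le_max_right i' b').trans hz1.le, hz2.le.trans hyI.2⟩
              · rw [hI2 _ h]; exact (le_max_right i' b').trans hz1.le
            exact (hgap ▸ ⟨⟨(le_max_left i' b').trans_lt hz1, hz2⟩,
              (hmemA z).2 (Or.inr ⟨b', hb', hzI⟩)⟩ : z ∈ (∅ : Set II))
    · intro b hbB
      refine ⟨Or.inl hbB, ?_⟩
      rcases Classical.em (b = 0) with h0 | h0
      · exact Or.inl h0
      right
      rcases Classical.em (∃ p ∈ B ∪ C, p < b) with ⟨p0, hp0D, hp0b⟩ | hnop
      · obtain ⟨p, ⟨hpD, hpb⟩, hpmax⟩ :=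
          exists_max_II (hD.subset (Set.sep_subset _ _)) (⟨p0, hp0D, hp0b⟩ :
            ({d ∈ B ∪ C | d < b} : Set II).Nonempty)
        refine ⟨p, hpb, Set.eq_empty_iff_forall_notMem.2 ?_⟩
        rintro y ⟨⟨hpy, hyb⟩, hyA⟩
        rcases (hmemA y).1 hyA with hyB | ⟨b', hb', hyI⟩
        · exact absurd (hpmax y ⟨Or.inl hyB, hyb⟩) (not_le.2 hpy)
        · rcases Classical.em (({d ∈ B ∪ C | b' < d} : Set II).Nonempty) with hne' | hne'
          · rw [hI1 _ hne'] at hyI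
            have hb'b : b' < b := lt_of_le_of_lt hyI.1 hyb
            obtain ⟨d, hdD, hb'd⟩ := hne'
            obtain ⟨hsCB, hsD, hbs, hsmin⟩ := hK1 b' hb' d hdD hb'd
            have h1 : succ b' ≤ b := hsmin b (Or.inl hbB) hb'b
            have h2 : b ≤ succ b' := by
              by_contra hlt
              push_neg at hlt
              have := hpmax _ ⟨hsD, hlt⟩
              exact absurd (hpy.trans_le (hyI.2.trans this)) (lt_irrefl p)
            exact hsCB.2 ((le_antisymm h1 h2) ▸ hbB)
          · rw [hI2 _ hne'] at hyI
            have hbb' : b ≤ b' := by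
              by_contra h
              push_neg at h
              exact hne' ⟨b, Or.inl hbB, h⟩
            exact absurd ((hbb'.trans hyI).trans_lt hyb) (lt_irrefl b)
      · have h0' : (0 : II) < b := lt_of_le_of_ne (zero_le : (0 : II) ≤ b) (Ne.symm h0)
        refine ⟨0, h0', Set.eq_empty_iff_forall_notMem.2 ?_⟩
        rintro y ⟨⟨h0y, hyb⟩, hyA⟩
        rcases (hmemA y).1 hyA with hyB | ⟨b', hb', hyI⟩
        · exact hnop ⟨y, Or.inl hyB, hyb⟩
        · exact hnop ⟨b', Or.inl hb'.1, (hIlow b' y hyI).trans_lt hyb⟩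
  · -- rSet = C
    apply Set.Subset.antisymm
    · rintro i ⟨hiA, i'', hii, hgap⟩
      rcases (hmemA i).1 hiA with hiB | ⟨b', hb', hyI⟩
      · rcases Classical.em (i ∈ C) with h | hiC
        · exact h
        exfalso
        rcases hmem2 i ⟨hiB, hiC⟩ with hs | hmax
        · obtain ⟨-, j, hjD, hij, hjmin, hjCB⟩ := hs
          have hne' : ({d ∈ B ∪ C | i < d} : Set II).Nonempty := ⟨j, hjD, hij⟩
          obtain ⟨hsD, his, hsmin⟩ := hsucc i hne'
          obtain ⟨z, hz1, hz2⟩ := exists_between (lt_min hii his)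
          have hzI : z ∈ I i := by
            rw [hI1 _ hne']
            exact ⟨hz1.le, (hz2.trans_le (min_le_right _ _)).le⟩
          exact (hgap ▸ ⟨⟨hz1, hz2.trans_le (min_le_left _ _)⟩,
            (hmemA z).2 (Or.inr ⟨i, ⟨hiB, hiC⟩, hzI⟩)⟩ : z ∈ (∅ : Set II))
        · have hno : ¬ ({d ∈ B ∪ C | i < d} : Set II).Nonempty := by
            rintro ⟨d, hdD, hid⟩
            exact absurd (hmax.2 d hdD) (not_le.2 hid)
          obtain ⟨z, hz1, hz2⟩ := exists_between hii
          have hzI : z ∈ I i := by rw [hI2 _ hno]; exact hz1.le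
          exact (hgap ▸ ⟨⟨hz1, hz2⟩,
            (hmemA z).2 (Or.inr ⟨i, ⟨hiB, hiC⟩, hzI⟩)⟩ : z ∈ (∅ : Set II))
      · rcases Classical.em (({d ∈ B ∪ C | b' < d} : Set II).Nonempty) with h | h
        · rw [hI1 _ h] at hyI
          obtain ⟨d', hd'D, hb'd⟩ := h
          obtain ⟨hsCB, hsD, hbs, hsmin⟩ := hK1 b' hb' d' hd'D hb'd
          rcases eq_or_lt_of_le hyI.2 with heq | hlt
          · rw [heq]; exact hsCB.1
          · exfalso
            obtain ⟨z, hz1, hz2⟩ := exists_between (lt_min hii hlt)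
            have hzI : z ∈ I b' := by
              rw [hI1 _ ⟨d', hd'D, hb'd⟩]
              exact ⟨hyI.1.trans hz1.le, (hz2.trans_le (min_le_right _ _)).le⟩
            exact (hgap ▸ ⟨⟨hz1, hz2.trans_le (min_le_left _ _)⟩,
              (hmemA z).2 (Or.inr ⟨b', hb', hzI⟩)⟩ : z ∈ (∅ : Set II))
        · exfalso
          rw [hI2 _ h] at hyI
          obtain ⟨z, hz1, hz2⟩ := exists_between hii
          have hzI : z ∈ I b' := by rw [hI2 _ h]; exact hyI.trans hz1.le
          exact (hgap ▸ ⟨⟨hz1, hz2⟩,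
            (hmemA z).2 (Or.inr ⟨b', hb', hzI⟩)⟩ : z ∈ (∅ : Set II))
    · intro c hcC
      have hcA : c ∈ B ∪ ⋃ b ∈ B \ C, I b := by
        rcases Classical.em (c ∈ B) with hcB | hcB
        · exact Or.inl hcB
        · have hm0c : m0 < c :=
            lt_of_le_of_ne (hm0min c (Or.inr hcC)) (fun h => hcB (h ▸ hm0B))
          obtain ⟨p, ⟨hpD, hpc⟩, hpmax⟩ :=
            exists_max_II (hD.subset (Set.sep_subset _ _)) (⟨m0, hm0D, hm0c⟩ :
              ({d ∈ B ∪ C | d < c} : Set II).Nonempty)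
          have hcmin : ∀ k ∈ B ∪ C, p < k → c ≤ k := by
            intro k hk hpk
            by_contra hkc
            push_neg at hkc
            exact absurd (hpmax k ⟨hk, hkc⟩) (not_le.2 hpk)
          have hpS : p ∈ sInvSet (B ∪ C) (C \ B) :=
            ⟨hpD, c, Or.inr hcC, hpc, hcmin, ⟨hcC, hcB⟩⟩
          have hpBC := hsubBC hpS
          have hne' : ({d ∈ B ∪ C | p < d} : Set II).Nonempty := ⟨c, Or.inr hcC, hpc⟩
          obtain ⟨hsD, hps, hsmin⟩ := hsucc p hne'
          have hcs : c ≤ succ p := hcmin _ hsD hps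
          refine (hmemA c).2 (Or.inr ⟨p, hpBC, ?_⟩)
          rw [hI1 p hne']
          exact ⟨hpc.le, hcs⟩
      refine ⟨hcA, ?_⟩
      rcases Classical.em (∃ d ∈ B ∪ C, c < d) with ⟨d0, hd0D, hcd0⟩ | hnod
      · obtain ⟨q, ⟨hqD, hcq⟩, hqmin⟩ :=
          exists_min_II (hD.subset (Set.sep_subset _ _)) (⟨d0, hd0D, hcd0⟩ :
            ({d ∈ B ∪ C | c < d} : Set II).Nonempty)
        refine ⟨q, hcq, Set.eq_empty_iff_forall_notMem.2 ?_⟩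
        rintro y ⟨⟨hcy, hyq⟩, hyA⟩
        rcases (hmemA y).1 hyA with hyB | ⟨b', hb', hyI⟩
        · exact absurd (hqmin y ⟨Or.inl hyB, hcy⟩) (not_le.2 hyq)
        · rcases Classical.em (({d ∈ B ∪ C | b' < d} : Set II).Nonempty) with h | h
          · rw [hI1 _ h] at hyI
            obtain ⟨d', hd'D, hb'd⟩ := h
            obtain ⟨hsCB, hsD, hbs, hsmin⟩ := hK1 b' hb' d' hd'D hb'd
            have hb'c : b' ≤ c := by
              by_contra hcb
              push_neg at hcb
              exact absurd ((hqmin b' ⟨Or.inl hb'.1, hcb⟩).trans hyI.1) (not_le.2 hyq)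
            have hb'c' : b' < c := lt_of_le_of_ne hb'c (fun h => hb'.2 (h ▸ hcC))
            exact absurd (hyI.2.trans (hsmin c (Or.inr hcC) hb'c')) (not_le.2 hcy)
          · rw [hI2 _ h] at hyI
            exact h ⟨q, hqD, lt_of_le_of_lt hyI hyq⟩
      · refine ⟨c + 1, lt_add_of_pos_right c one_pos, Set.eq_empty_iff_forall_notMem.2 ?_⟩
        rintro y ⟨⟨hcy, -⟩, hyA⟩
        rcases (hmemA y).1 hyA with hyB | ⟨b', hb', hyI⟩
        · exact hnod ⟨y, Or.inl hyB, hcy⟩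
        · rcases Classical.em (({d ∈ B ∪ C | b' < d} : Set II).Nonempty) with h | h
          · rw [hI1 _ h] at hyI
            obtain ⟨d', hd'D, hb'd⟩ := h
            obtain ⟨hsCB, hsD, hbs, hsmin⟩ := hK1 b' hb' d' hd'D hb'd
            exact hnod ⟨succ b', hsD, hcy.trans_le hyI.2⟩
          · rw [hI2 _ h] at hyI
            have h1 : c ≤ b' := by
              by_contra hh
              push_neg at hh
              exact h ⟨c, Or.inr hcC, hh⟩
            have h2 : b' ≤ c := by
              by_contra hh
              push_neg at hh
              exact hnod ⟨b', Or.inl hb'.1, hh⟩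
            exact hb'.2 ((le_antisymm h2 h1) ▸ hcC)
/-- Let `B, C` be finite subsets of `𝕀`.  The following are equivalent:
(1) there exists a nonempty `A ∈ P_fci(𝕀)` with `l(A) = B` and `r(A) = C`;
(2) `B ≠ ∅`, `min(B ∪ C) ∈ B`, and either
(a) `max(B ∪ C) ∈ C` and `𝔰⁻¹(B ∪ C, C ∖ B) = B ∖ C`, or
(b) `max(B ∪ C) ∈ B ∖ C` and `𝔰⁻¹(B ∪ C, C ∖ B) ∪ {max(B ∪ C)} = B ∖ C`. -/
theorem exists_fci_with_endpoints_iff (B C : Set II) (hB : B.Finite) (hC : C.Finite) :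
    (∃ A : Set II, IsFCI A ∧ A ≠ ∅ ∧ lSet A = B ∧ rSet A = C) ↔
      (B ≠ ∅ ∧ (∃ m ∈ minSet (B ∪ C), m ∈ B) ∧
        (((∃ m ∈ maxSet (B ∪ C), m ∈ C) ∧ sInvSet (B ∪ C) (C \ B) = B \ C) ∨
          ((∃ m ∈ maxSet (B ∪ C), m ∈ B \ C) ∧
            sInvSet (B ∪ C) (C \ B) ∪ maxSet (B ∪ C) = B \ C))) := by
  constructor
  · rintro ⟨A, hA, hne, rfl, rfl⟩
    exact forward_dir hA hne hB hC
  · rintro ⟨hBne, hmin, hcase⟩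
    exact backward_dir B C hB hC hBne hmin hcase

end MCpaper
end

section
/- There exists an L_WSO-formula φ_∈(X_l, X_r, Z) such that for every i ∈ 𝕀 and every A ∈ P_fci(𝕀): i ∈ A if and only if WSO(𝕀) ⊨ φ_∈(l(A), r(A), {i}). -/
namespace MCpaper

open FirstOrder Language Structure Set

/-! ### Auxiliary lemmas for Statement 16 -/

section Aux

open Set

lemma minSet_singleton' {α : Type*} [LinearOrder α] (a : α) : minSet ({a} : Set α) = {a} := by
  ext x
  simp only [minSet, Set.mem_sep_iff, Set.mem_singleton_iff]
  constructor
  · rintro ⟨rfl, -⟩; rfl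
  · rintro rfl; exact ⟨rfl, fun j hj => le_of_eq hj.symm⟩

lemma minSet_eq_singleton {α : Type*} [LinearOrder α] {Y : Set α}
    (h : minSet Y = Y) (hne : Y ≠ ∅) : ∃ a, Y = {a} := by
  have hss : Y.Subsingleton := by
    intro x hx y hy
    rw [← h] at hx hy
    exact le_antisymm (hx.2 y hy.1) (hy.2 x hx.1)
  rcases hss.eq_empty_or_singleton with h0 | h1
  · exact absurd h0 hne
  · exact h1

lemma minSet_pair_iff {α : Type*} [LinearOrder α] (a b : α) :
    minSet ({a} ∪ {b} : Set α) = {a} ↔ a ≤ b := by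
  constructor
  · intro h
    have ha : a ∈ minSet ({a} ∪ {b} : Set α) := by rw [h]; rfl
    exact ha.2 b (Or.inr rfl)
  · intro hab
    ext x
    simp only [minSet, Set.mem_sep_iff, Set.mem_union, Set.mem_singleton_iff]
    constructor
    · rintro ⟨rfl | rfl, h2⟩
      · rfl
      · exact le_antisymm (h2 a (Or.inl rfl)) hab
    · rintro rfl
      refine ⟨Or.inl rfl, fun j hj => ?_⟩
      rcases hj with rfl | rfl
      · exact le_rfl
      · exact hab

lemma coe_untop'_of_ne_top {α : Type*} {x : WithTop α} (d : α) (h : x ≠ ⊤) :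
    ((x.untopD d : α) : WithTop α) = x := by
  cases x with
  | top => exact absurd rfl h
  | coe c => rfl

/-- Normal form for finite unions of closed intervals, with upper ends in `WithTop II`. -/
lemma IsFCI.norm {A : Set II} (h : IsFCI A) :
    ∃ (k : ℕ) (a : Fin k → II) (b : Fin k → WithTop II),
      ∀ x, x ∈ A ↔ ∃ m, a m ≤ x ∧ (x : WithTop II) ≤ b m := by
  obtain ⟨k, f, hf, rfl⟩ := h
  have hchoice : ∀ m, ∃ p : II × WithTop II, f m = {x | p.1 ≤ x ∧ (x : WithTop II) ≤ p.2} := by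
    intro m
    rcases hf m with ⟨i, j, hij⟩ | ⟨i, hi⟩
    · exact ⟨(i, (j : WithTop II)), by ext x; simp [hij, Set.mem_Icc]⟩
    · exact ⟨(i, ⊤), by ext x; simp [hi, Set.mem_Ici]⟩
  choose p hp using hchoice
  refine ⟨k, fun m => (p m).1, fun m => (p m).2, fun x => ?_⟩
  simp only [Set.mem_iUnion]
  constructor
  · rintro ⟨m, hm⟩; rw [hp m] at hm; exact ⟨m, hm⟩
  · rintro ⟨m, hm⟩; exact ⟨m, (hp m) ▸ hm⟩

/-- Forward direction of the key lemma: every point of `A` has a left endpoint of `A`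
below it with the whole closed interval inside `A`. -/
lemma exists_left_endpoint {k : ℕ} {a : Fin k → II} {b : Fin k → WithTop II} {A : Set II}
    (hmem : ∀ x, x ∈ A ↔ ∃ m, a m ≤ x ∧ (x : WithTop II) ≤ b m)
    {i : II} (hi : i ∈ A) : ∃ l ∈ lSet A, l ≤ i ∧ Set.Icc l i ⊆ A := by
  classical
  letI : DecidablePred (fun m : Fin k => a m ≤ i ∧ Set.Icc (a m) i ⊆ A) :=
    fun _ => Classical.propDecidable _
  set S : Finset II :=
    (Finset.univ.filter fun m => a m ≤ i ∧ Set.Icc (a m) i ⊆ A).image a with hSdef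
  have hS : S.Nonempty := by
    obtain ⟨m, ham, hbm⟩ := (hmem i).1 hi
    refine ⟨a m, Finset.mem_image.2 ⟨m, Finset.mem_filter.2 ⟨Finset.mem_univ _, ham, ?_⟩, rfl⟩⟩
    intro x hx
    exact (hmem x).2 ⟨m, hx.1, le_trans (WithTop.coe_le_coe.2 hx.2) hbm⟩
  set l := S.min' hS with hldef
  obtain ⟨m0, hm0, hlm0⟩ := Finset.mem_image.1 (S.min'_mem hS)
  have hm0' := (Finset.mem_filter.1 hm0).2
  have hlm0' : a m0 = l := hlm0.trans hldef.symm
  have hli : l ≤ i := hlm0' ▸ hm0'.1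
  have hIcc : Set.Icc l i ⊆ A := hlm0' ▸ hm0'.2
  have hlA : l ∈ A := hIcc ⟨le_refl l, hli⟩
  refine ⟨l, ⟨hlA, ?_⟩, hli, hIcc⟩
  rcases eq_or_ne l 0 with h0 | h0
  · exact Or.inl h0
  have hl0 : 0 < l := lt_of_le_of_ne (zero_le : (0:II) ≤ l) (Ne.symm h0)
  have hsub : ∀ m, a m < l → b m < (l : WithTop II) := by
    intro m hal
    by_contra hb
    push_neg at hb
    have hmS : a m ∈ S := by
      refine Finset.mem_image.2 ⟨m, Finset.mem_filter.2 ⟨Finset.mem_univ _, hal.le.trans hli, ?_⟩, rfl⟩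
      intro x hx
      rcases le_or_gt l x with h | h
      · exact hIcc ⟨h, hx.2⟩
      · exact (hmem x).2 ⟨m, hx.1, le_trans (WithTop.coe_le_coe.2 h.le) hb⟩
    exact absurd (S.min'_le _ hmS) (not_le.2 hal)
  letI : DecidablePred (fun m : Fin k => b m < (l : WithTop II)) :=
    fun _ => Classical.propDecidable _
  set T : Finset II :=
    insert 0 ((Finset.univ.filter fun m => b m < (l : WithTop II)).image
      fun m => (b m).untopD 0) with hTdef
  have hT : T.Nonempty := ⟨0, Finset.mem_insert_self _ _⟩
  have hi'l : T.max' hT < l := by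
    rw [Finset.max'_lt_iff]
    intro y hy
    rcases Finset.mem_insert.1 hy with rfl | hy
    · exact hl0
    · obtain ⟨m, hm, rfl⟩ := Finset.mem_image.1 hy
      have hbm := (Finset.mem_filter.1 hm).2
      rw [← WithTop.coe_lt_coe, coe_untop'_of_ne_top 0 (ne_top_of_lt hbm)]
      exact hbm
  refine Or.inr ⟨T.max' hT, hi'l, ?_⟩
  rw [Set.eq_empty_iff_forall_notMem]
  rintro x ⟨⟨hx1, hx2⟩, hxA⟩
  obtain ⟨m, ham, hbm⟩ := (hmem x).1 hxA
  have hbl : b m < (l : WithTop II) := hsub m (ham.trans_lt hx2)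
  have hmT : (b m).untopD 0 ∈ T :=
    Finset.mem_insert_of_mem (Finset.mem_image.2
      ⟨m, Finset.mem_filter.2 ⟨Finset.mem_univ _, hbl⟩, rfl⟩)
  have hx_le : x ≤ (b m).untopD 0 := by
    rw [← WithTop.coe_le_coe, coe_untop'_of_ne_top 0 (ne_top_of_lt hbl)]
    exact hbm
  exact absurd (hx_le.trans (T.le_max' _ hmT)) (not_le.2 hx1)

/-- Density: no right endpoint of `A` strictly inside an interval contained in `A`. -/
lemma no_right_endpoint {A : Set II} {l i r : II} (hIcc : Set.Icc l i ⊆ A)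
    (hr : r ∈ rSet A) (hlr : l ≤ r) (hri : r ≤ i) : r = i := by
  by_contra hne
  have hri' : r < i := lt_of_le_of_ne hri hne
  obtain ⟨i'', hi''r, hgap⟩ := hr.2
  obtain ⟨x, hx1, hx2⟩ := exists_between (lt_min hi''r hri')
  have hxA : x ∈ A := hIcc ⟨hlr.trans hx1.le, (hx2.trans_le (min_le_right _ _)).le⟩
  have : x ∈ Set.Ioo r i'' ∩ A := ⟨⟨hx1, hx2.trans_le (min_le_left _ _)⟩, hxA⟩
  rw [hgap] at this
  exact this

/-- Backward direction of the key lemma. -/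
lemma mem_of_left_endpoint {k : ℕ} {a : Fin k → II} {b : Fin k → WithTop II} {A : Set II}
    (hmem : ∀ x, x ∈ A ↔ ∃ m, a m ≤ x ∧ (x : WithTop II) ≤ b m)
    {l i : II} (hl : l ∈ lSet A) (hli : l ≤ i)
    (H : ∀ r ∈ rSet A, l ≤ r → r ≤ i → r = i) : i ∈ A := by
  classical
  by_contra hiA
  have hlA : l ∈ A := hl.1
  have key : ∀ c, Set.Icc l c ⊆ A → c < i := by
    intro c hc
    by_contra h
    push_neg at h
    exact hiA (hc ⟨hli, h⟩)
  letI : DecidablePred (fun m : Fin k => (l : WithTop II) ≤ b m ∧ b m ≠ ⊤ ∧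
      Set.Icc l ((b m).untopD 0) ⊆ A) := fun _ => Classical.propDecidable _
  set S : Finset II :=
    (Finset.univ.filter fun m => (l : WithTop II) ≤ b m ∧ b m ≠ ⊤ ∧
      Set.Icc l ((b m).untopD 0) ⊆ A).image fun m => (b m).untopD 0 with hSdef
  have hS : S.Nonempty := by
    obtain ⟨m0, ham0, hbm0⟩ := (hmem l).1 hlA
    have hbt : b m0 ≠ ⊤ := by
      intro ht
      refine hiA ((hmem i).2 ⟨m0, ham0.trans hli, ?_⟩)
      rw [ht]; exact le_top
    refine ⟨(b m0).untopD 0, Finset.mem_image.2 ⟨m0, Finset.mem_filter.2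
      ⟨Finset.mem_univ _, hbm0, hbt, ?_⟩, rfl⟩⟩
    intro x hx
    refine (hmem x).2 ⟨m0, ham0.trans hx.1, ?_⟩
    rw [← coe_untop'_of_ne_top 0 hbt]
    exact_mod_cast hx.2
  set r := S.max' hS with hrdef
  obtain ⟨m1, hm1, hrm1⟩ := Finset.mem_image.1 (S.max'_mem hS)
  have hm1' := (Finset.mem_filter.1 hm1).2
  have hrm1' : (b m1).untopD 0 = r := hrm1.trans hrdef.symm
  have hbr : b m1 = (r : WithTop II) := by
    rw [← hrm1']
    exact (coe_untop'_of_ne_top 0 hm1'.2.1).symm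
  have hIlr : Set.Icc l r ⊆ A := hrm1' ▸ hm1'.2.2
  have hlr : l ≤ r := by
    have := hm1'.1
    rw [hbr] at this
    exact_mod_cast this
  have hri : r < i := key r hIlr
  have hrA : r ∈ A := hIlr ⟨hlr, le_refl r⟩
  have hsub : ∀ m, a m ≤ r → b m ≤ (r : WithTop II) := by
    intro m ham
    by_contra hb
    push_neg at hb
    have hbt : b m ≠ ⊤ :=
      fun ht => hiA ((hmem i).2 ⟨m, ham.trans hri.le, by rw [ht]; exact le_top⟩)
    have hc := coe_untop'_of_ne_top (x := b m) 0 hbt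
    set c := (b m).untopD 0 with hcdef
    have hrc : r < c := by rw [← WithTop.coe_lt_coe, hc]; exact hb
    have hIlc : Set.Icc l c ⊆ A := by
      intro x hx
      rcases le_or_gt x r with h | h
      · exact hIlr ⟨hx.1, h⟩
      · refine (hmem x).2 ⟨m, ham.trans h.le, ?_⟩
        rw [← hc]
        exact_mod_cast hx.2
    have hcS : c ∈ S := by
      refine Finset.mem_image.2 ⟨m, Finset.mem_filter.2 ⟨Finset.mem_univ _, ?_, hbt, hIlc⟩, rfl⟩
      rw [← hc]
      exact_mod_cast hlr.trans hrc.le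
    exact absurd (S.le_max' _ hcS) (not_le.2 hrc)
  letI : DecidablePred (fun m : Fin k => r < a m) := fun _ => Classical.propDecidable _
  set T : Finset II := insert i ((Finset.univ.filter fun m => r < a m).image a) with hTdef
  have hT : T.Nonempty := ⟨i, Finset.mem_insert_self _ _⟩
  have hrT : r < T.min' hT := by
    rw [Finset.lt_min'_iff]
    intro y hy
    rcases Finset.mem_insert.1 hy with rfl | hy
    · exact hri
    · obtain ⟨m, hm, rfl⟩ := Finset.mem_image.1 hy
      exact (Finset.mem_filter.1 hm).2
  have hrR : r ∈ rSet A := by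
    refine ⟨hrA, T.min' hT, hrT, ?_⟩
    rw [Set.eq_empty_iff_forall_notMem]
    rintro x ⟨⟨hx1, hx2⟩, hxA⟩
    obtain ⟨m, ham, hbm⟩ := (hmem x).1 hxA
    rcases le_or_gt (a m) r with h | h
    · have := (hbm.trans (hsub m h))
      exact absurd (by exact_mod_cast this : x ≤ r) (not_le.2 hx1)
    · have hmT : a m ∈ T :=
        Finset.mem_insert_of_mem (Finset.mem_image.2
          ⟨m, Finset.mem_filter.2 ⟨Finset.mem_univ _, h⟩, rfl⟩)
      exact absurd (ham.trans_lt hx2) (not_lt.2 (T.min'_le _ hmT))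
  exact absurd (H r hrR hlr hri.le) hri.ne

/-- The key characterisation of membership in a finite union of closed intervals. -/
lemma mem_iff_endpoints {A : Set II} (hA : IsFCI A) (i : II) :
    i ∈ A ↔ ∃ l ∈ lSet A, l ≤ i ∧ ∀ r ∈ rSet A, l ≤ r → r ≤ i → r = i := by
  obtain ⟨k, a, b, hmem⟩ := hA.norm
  constructor
  · intro hi
    obtain ⟨l, hl, hli, hIcc⟩ := exists_left_endpoint hmem hi
    exact ⟨l, hl, hli, fun r hr hlr hri => no_right_endpoint hIcc hr hlr hri⟩
  · rintro ⟨l, hl, hli, H⟩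
    exact mem_of_left_endpoint hmem hl hli H

end Aux

/-! ### The formula -/

section Formula

open FirstOrder Language Term

/-- Union term. -/
def tU {γ : Type*} (s t : LWSO.Term γ) : LWSO.Term γ := func WSOFunc.union ![s, t]

/-- Intersection term. -/
def tI {γ : Type*} (s t : LWSO.Term γ) : LWSO.Term γ := func WSOFunc.inter ![s, t]

/-- Min term. -/
def tMin {γ : Type*} (s : LWSO.Term γ) : LWSO.Term γ := func WSOFunc.min ![s]

/-- Bottom term. -/
def tBot {γ : Type*} : LWSO.Term γ := func WSOFunc.bot ![]

lemma realize_tU {γ : Type*} (v : γ → FinSub) (s t : LWSO.Term γ) :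
    ((tU s t).realize v : FinSub).1 = (s.realize v).1 ∪ (t.realize v).1 := rfl

lemma realize_tI {γ : Type*} (v : γ → FinSub) (s t : LWSO.Term γ) :
    ((tI s t).realize v : FinSub).1 = (s.realize v).1 ∩ (t.realize v).1 := rfl

lemma realize_tMin {γ : Type*} (v : γ → FinSub) (s : LWSO.Term γ) :
    ((tMin s).realize v : FinSub).1 = minSet (s.realize v).1 := rfl

lemma realize_tBot {γ : Type*} (v : γ → FinSub) :
    ((tBot : LWSO.Term γ).realize v : FinSub).1 = ∅ := rfl

/-- The inner universally quantified formula, at quantifier depth 2: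
variable `0` is `L`, variable `1` is `R`. -/
def chiMem : LWSO.BoundedFormula (Fin 3) 2 :=
  ((tMin (var (Sum.inr 1)) =' var (Sum.inr 1)) ⊓
    (∼(var (Sum.inr 1) =' tBot)) ⊓
    (tI (var (Sum.inr 1)) (var (Sum.inl 1)) =' var (Sum.inr 1)) ⊓
    (tMin (tU (var (Sum.inr 0)) (var (Sum.inr 1))) =' var (Sum.inr 0)) ⊓
    (tMin (tU (var (Sum.inr 1)) (var (Sum.inl 2))) =' var (Sum.inr 1))) ⟹
  (var (Sum.inr 1) =' var (Sum.inl 2))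

/-- The membership formula `φ_∈(X_l, X_r, Z)`. -/
def phiMem : LWSO.Formula (Fin 3) :=
  BoundedFormula.ex
    ((tMin (var (Sum.inr 0)) =' var (Sum.inr 0)) ⊓
      (∼(var (Sum.inr 0) =' tBot)) ⊓
      (tI (var (Sum.inr 0)) (var (Sum.inl 0)) =' var (Sum.inr 0)) ⊓
      (tMin (tU (var (Sum.inr 0)) (var (Sum.inl 2))) =' var (Sum.inr 0)) ⊓
      BoundedFormula.all chiMem)

lemma snoc_one_zero {M : Type*} (xs : Fin 1 → M) (a : M) :
    (Fin.snoc xs a : Fin 2 → M) 0 = xs 0 := rfl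

lemma snoc_one_one {M : Type*} (xs : Fin 1 → M) (a : M) :
    (Fin.snoc xs a : Fin 2 → M) 1 = a := rfl

lemma snoc_zero_zero {M : Type*} (xs : Fin 0 → M) (a : M) :
    (Fin.snoc xs a : Fin 1 → M) 0 = a := rfl

lemma phiMem_realize (v : Fin 3 → FinSub) :
    phiMem.Realize v ↔ ∃ x : FinSub,
      (minSet x.1 = x.1 ∧ x.1 ≠ ∅ ∧ x.1 ∩ (v 0).1 = x.1 ∧ minSet (x.1 ∪ (v 2).1) = x.1) ∧
      ∀ y : FinSub, minSet y.1 = y.1 → y.1 ≠ ∅ → y.1 ∩ (v 1).1 = y.1 →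
        minSet (x.1 ∪ y.1) = x.1 → minSet (y.1 ∪ (v 2).1) = y.1 → y = v 2 := by
  simp only [phiMem, chiMem, Formula.Realize, BoundedFormula.realize_ex,
    BoundedFormula.realize_inf, BoundedFormula.realize_all, BoundedFormula.realize_imp,
    BoundedFormula.realize_not, BoundedFormula.realize_bdEqual,
    Subtype.ext_iff, realize_tU, realize_tI, realize_tMin, realize_tBot, Term.realize_var,
    Sum.elim_inl, Sum.elim_inr, snoc_one_zero, snoc_one_one, snoc_zero_zero, Ne]
  constructor
  · rintro ⟨x, ⟨⟨⟨h1, h2⟩, h3⟩, h4⟩, h5⟩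
    exact ⟨x, ⟨h1, h2, h3, h4⟩, fun y a hb c d e => h5 y ⟨⟨⟨⟨a, hb⟩, c⟩, d⟩, e⟩⟩
  · rintro ⟨x, ⟨h1, h2, h3, h4⟩, h5⟩
    exact ⟨x, ⟨⟨⟨h1, h2⟩, h3⟩, h4⟩, fun y hy => h5 y hy.1.1.1.1 hy.1.1.1.2 hy.1.1.2 hy.1.2 hy.2⟩

end Formula

universe u v

/-- There exists an `L_WSO`-formula `φ_∈(X_l, X_r, Z)` such that for every
`i ∈ 𝕀` and every `A ∈ P_fci(𝕀)`: `i ∈ A` iff `WSO(𝕀) ⊨ φ_∈(l(A), r(A), {i})`.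
(The hypotheses `hl`, `hr`, true for every `A ∈ P_fci(𝕀)`, record that `l(A)` and `r(A)` are
finite, hence elements of `WSO(𝕀)`.) -/
theorem mem_definable_from_endpoints :
    ∃ φ : LWSO.Formula (Fin 3),
      ∀ (i : II) (A : Set II), IsFCI A →
        ∀ (hl : (lSet A).Finite) (hr : (rSet A).Finite),
          (i ∈ A ↔ φ.Realize (![⟨lSet A, hl⟩, ⟨rSet A, hr⟩, ⟨{i}, finite_singleton i⟩] : Fin 3 → FinSub)) := by
  refine ⟨phiMem, fun i A hA hl hr => ?_⟩
  rw [phiMem_realize, mem_iff_endpoints hA i]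
  simp only [Matrix.cons_val_zero, Matrix.cons_val_one, Matrix.head_cons, Matrix.cons_val_two,
    Matrix.tail_cons]
  constructor
  · rintro ⟨l, hlA, hli, H⟩
    refine ⟨⟨{l}, finite_singleton l⟩, ⟨minSet_singleton' l, Set.singleton_ne_empty l,
      Set.inter_eq_left.2 (Set.singleton_subset_iff.2 hlA), (minSet_pair_iff l i).2 hli⟩,
      fun y hy1 hy2 hy3 hy4 hy5 => ?_⟩
    obtain ⟨r, hyr⟩ := minSet_eq_singleton hy1 hy2
    rw [hyr] at hy3 hy4 hy5
    have hrR : r ∈ rSet A :=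
      Set.singleton_subset_iff.1 (Set.inter_eq_left.1 hy3)
    have hlr : l ≤ r := (minSet_pair_iff l r).1 hy4
    have hri : r ≤ i := (minSet_pair_iff r i).1 hy5
    have : r = i := H r hrR hlr hri
    exact Subtype.ext (by rw [hyr, this])
  · rintro ⟨x, ⟨h1, h2, h3, h4⟩, h5⟩
    obtain ⟨l, hx⟩ := minSet_eq_singleton h1 h2
    rw [hx] at h3 h4
    refine ⟨l, Set.singleton_subset_iff.1 (Set.inter_eq_left.1 h3),
      (minSet_pair_iff l i).1 h4, fun r hrR hlr hri => ?_⟩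
    have := h5 ⟨{r}, finite_singleton r⟩ (minSet_singleton' r) (Set.singleton_ne_empty r)
      (Set.inter_eq_left.2 (Set.singleton_subset_iff.2 hrR))
      (by rw [hx]; exact (minSet_pair_iff l r).2 hlr)
      ((minSet_pair_iff r i).2 hri)
    have h' : ({r} : Set II) = {i} := congrArg Subtype.val this
    exact Set.singleton_eq_singleton_iff.1 h'

end MCpaper
end
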